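/- Let ψ(q) = #{(m,n): m ≥ n ≥ 0, C(m,n) odd, m + 2n = q} and M(u) = Σ_{0 ≤ q < u} ψ(q). Then for every positive integer u and nonnegative integer k, M(2^k u) = 3^k·M(u) − Σ_{l=0}^{k−1} 3^l·ψ(2^{k−l−1}u − 1). -/

import Mathlib

/-- `ψ(q)`: number of `(m,n)` with `m ≥ n ≥ 0`, `C(m,n)` odd and `m + 2n = q`
(extended by `0` to negative `q`). -/
noncomputable def psi (q : ℤ) : ℕ :=
  {mn : ℕ × ℕ | mn.2 ≤ mn.1 ∧ (mn.1 : ℤ) + 2 * (mn.2 : ℤ) = q ∧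
    ¬ 2 ∣ Nat.choose mn.1 mn.2}.ncard

/-- `M(u) = Σ_{0 ≤ q < u} ψ(q)`. -/
noncomputable def Mfun (u : ℕ) : ℕ := ∑ q ∈ Finset.range u, psi (q : ℤ)


/-- The set counted by `psi`. -/
def Spsi (q : ℤ) : Set (ℕ × ℕ) :=
  {mn : ℕ × ℕ | mn.2 ≤ mn.1 ∧ (mn.1 : ℤ) + 2 * (mn.2 : ℤ) = q ∧
    ¬ 2 ∣ Nat.choose mn.1 mn.2}

lemma Spsi_finite (q : ℤ) : (Spsi q).Finite := by
  apply Set.Finite.subset (Set.finite_Icc ((0, 0) : ℕ × ℕ) (q.toNat, q.toNat))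
  rintro ⟨m, n⟩ ⟨h1, h2, h3⟩
  simp only [Set.mem_Icc, Prod.le_def]
  omega

instance : Fact (Nat.Prime 2) := ⟨Nat.prime_two⟩

lemma odd_choose_iff (n k : ℕ) :
    ¬ 2 ∣ Nat.choose n k ↔
      (¬ 2 ∣ Nat.choose (n % 2) (k % 2) ∧ ¬ 2 ∣ Nat.choose (n / 2) (k / 2)) := by
  have h := Choose.choose_modEq_choose_mod_mul_choose_div_nat (n := n) (k := k) (p := 2)
  rw [h.dvd_iff dvd_rfl, Nat.Prime.dvd_mul Nat.prime_two, not_or]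

lemma bit00 (m n : ℕ) : ¬ 2 ∣ Nat.choose (2*m) (2*n) ↔ ¬ 2 ∣ Nat.choose m n := by
  rw [odd_choose_iff]
  have h1 : 2*m % 2 = 0 := by omega
  have h2 : 2*n % 2 = 0 := by omega
  have h3 : 2*m / 2 = m := by omega
  have h4 : 2*n / 2 = n := by omega
  rw [h1, h2, h3, h4]
  norm_num

lemma bit10 (m n : ℕ) : ¬ 2 ∣ Nat.choose (2*m+1) (2*n) ↔ ¬ 2 ∣ Nat.choose m n := by
  rw [odd_choose_iff]
  have h1 : (2*m+1) % 2 = 1 := by omega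
  have h2 : 2*n % 2 = 0 := by omega
  have h3 : (2*m+1) / 2 = m := by omega
  have h4 : 2*n / 2 = n := by omega
  rw [h1, h2, h3, h4]
  norm_num

lemma bit11 (m n : ℕ) : ¬ 2 ∣ Nat.choose (2*m+1) (2*n+1) ↔ ¬ 2 ∣ Nat.choose m n := by
  rw [odd_choose_iff]
  have h1 : (2*m+1) % 2 = 1 := by omega
  have h2 : (2*n+1) % 2 = 1 := by omega
  have h3 : (2*m+1) / 2 = m := by omega
  have h4 : (2*n+1) / 2 = n := by omega
  rw [h1, h2, h3, h4]
  norm_num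

lemma bit01 (m n : ℕ) : 2 ∣ Nat.choose (2*m) (2*n+1) := by
  by_contra h
  rw [odd_choose_iff] at h
  have h1 : 2*m % 2 = 0 := by omega
  have h2 : (2*n+1) % 2 = 1 := by omega
  rw [h1, h2] at h
  norm_num at h

lemma psi_eq (q : ℤ) : psi q = (Spsi q).ncard := rfl

lemma psi_neg {q : ℤ} (hq : q < 0) : psi q = 0 := by
  have h : Spsi q = ∅ := by
    ext ⟨m, n⟩
    simp only [Spsi, Set.mem_setOf_eq, Set.mem_empty_iff_false, iff_false]
    rintro ⟨h1, h2, h3⟩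
    omega
  rw [psi_eq, h, Set.ncard_empty]

lemma Spsi_even (q : ℤ) :
    Spsi (2*q) = (fun p : ℕ × ℕ => (2*p.1, 2*p.2)) '' Spsi q := by
  ext ⟨a, b⟩
  constructor
  · rintro ⟨h1, h2, h3⟩
    obtain ⟨m, rfl⟩ : ∃ m, a = 2*m := ⟨a/2, by omega⟩
    obtain ⟨n, rfl⟩ : ∃ n, b = 2*n := by
      refine ⟨b/2, ?_⟩
      by_contra hb
      have hb1 : b = 2*(b/2)+1 := by omega
      rw [hb1] at h3
      exact h3 (bit01 m (b/2))
    exact ⟨(m, n), ⟨by omega, by omega, (bit00 m n).mp h3⟩, rfl⟩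
  · rintro ⟨⟨m, n⟩, ⟨h1, h2, h3⟩, heq⟩
    simp only [Prod.ext_iff] at heq
    obtain ⟨ha, hb⟩ := heq
    subst ha; subst hb
    exact ⟨by omega, by push_cast; omega, (bit00 m n).mpr h3⟩

lemma Spsi_odd (q : ℤ) :
    Spsi (2*q+1) = ((fun p : ℕ × ℕ => (2*p.1+1, 2*p.2)) '' Spsi q) ∪
      ((fun p : ℕ × ℕ => (2*p.1+1, 2*p.2+1)) '' Spsi (q-1)) := by
  ext ⟨a, b⟩
  constructor
  · rintro ⟨h1, h2, h3⟩
    obtain ⟨m, rfl⟩ : ∃ m, a = 2*m+1 := ⟨a/2, by omega⟩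
    rcases Nat.even_or_odd b with ⟨n, hb⟩ | ⟨n, hb⟩
    · left
      obtain rfl : b = 2*n := by omega
      exact ⟨(m, n), ⟨by omega, by omega, (bit10 m n).mp h3⟩, rfl⟩
    · right
      obtain rfl : b = 2*n+1 := by omega
      exact ⟨(m, n), ⟨by omega, by omega, (bit11 m n).mp h3⟩, rfl⟩
  · rintro (⟨⟨m, n⟩, ⟨h1, h2, h3⟩, heq⟩ | ⟨⟨m, n⟩, ⟨h1, h2, h3⟩, heq⟩) <;>
      simp only [Prod.ext_iff] at heq <;> obtain ⟨ha, hb⟩ := heq <;> subst ha <;> subst hb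
    · exact ⟨by omega, by push_cast; omega, (bit10 m n).mpr h3⟩
    · exact ⟨by omega, by push_cast; omega, (bit11 m n).mpr h3⟩

lemma psi_two_mul (q : ℤ) : psi (2*q) = psi q := by
  rw [psi_eq, psi_eq, Spsi_even]
  exact Set.ncard_image_of_injective _ (by intro ⟨x1, x2⟩ ⟨y1, y2⟩ h; simp only [Prod.ext_iff] at h ⊢; omega)

lemma psi_odd (q : ℤ) : psi (2*q+1) = psi q + psi (q-1) := by
  rw [psi_eq, psi_eq, psi_eq, Spsi_odd]
  rw [Set.ncard_union_eq ?_ (((Spsi_finite q).image _)) (((Spsi_finite (q-1)).image _))]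
  · rw [Set.ncard_image_of_injective _ (by intro ⟨x1, x2⟩ ⟨y1, y2⟩ h; simp only [Prod.ext_iff] at h ⊢; omega),
      Set.ncard_image_of_injective _ (by intro ⟨x1, x2⟩ ⟨y1, y2⟩ h; simp only [Prod.ext_iff] at h ⊢; omega)]
  · rw [Set.disjoint_left]
    rintro ⟨a, b⟩ ⟨⟨m, n⟩, _, heq⟩ ⟨⟨m', n'⟩, _, heq'⟩
    simp only [Prod.ext_iff] at heq heq'
    omega

lemma Mfun_succ (u : ℕ) : Mfun (u+1) = Mfun u + psi (u : ℤ) :=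
  Finset.sum_range_succ _ _

lemma Mfun_two_mul (u : ℕ) : (Mfun (2*u) : ℤ) = 3 * Mfun u - psi ((u : ℤ) - 1) := by
  induction u with
  | zero =>
    have h : psi (-1) = 0 := psi_neg (by norm_num)
    simp [Mfun, h]
  | succ n ih =>
    have e1 : 2*(n+1) = (2*n) + 1 + 1 := by ring
    rw [e1, Mfun_succ, Mfun_succ, Mfun_succ]
    have c1 : ((2*n : ℕ) : ℤ) = 2*(n : ℤ) := by push_cast; ring
    have c2 : ((2*n+1 : ℕ) : ℤ) = 2*(n : ℤ)+1 := by push_cast; ring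
    rw [c1, c2, psi_two_mul, psi_odd]
    have c3 : ((n:ℤ) + 1) - 1 = (n:ℤ) := by ring
    push_cast
    rw [c3]
    push_cast at ih
    linarith

lemma Mfun_pow_mul_aux (u : ℕ) (k : ℕ) :
    (Mfun (2 ^ k * u) : ℤ) =
      3 ^ k * Mfun u - ∑ l ∈ Finset.range k, 3 ^ l * psi ((2 : ℤ) ^ (k - l - 1) * u - 1) := by
  induction k with
  | zero => simp
  | succ k ih =>
    have e1 : 2 ^ (k+1) * u = 2 * (2 ^ k * u) := by ring
    rw [e1, Mfun_two_mul, ih]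
    have e2 : ∀ l, k + 1 - (l + 1) - 1 = k - l - 1 := by omega
    have e3 : k + 1 - 0 - 1 = k := by omega
    push_cast
    rw [Finset.sum_range_succ']
    simp only [e2, e3, pow_zero, one_mul]
    have hs : ∑ l ∈ Finset.range k, (3:ℤ)^(l+1) * (psi ((2:ℤ)^(k-l-1)*(u:ℤ) - 1) : ℤ)
        = 3 * ∑ l ∈ Finset.range k, (3:ℤ)^l * (psi ((2:ℤ)^(k-l-1)*(u:ℤ) - 1) : ℤ) := by
      rw [Finset.mul_sum]
      exact Finset.sum_congr rfl fun l _ => by ring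
    rw [hs]
    ring

theorem Mfun_pow_mul (u : ℕ) (hu : 0 < u) (k : ℕ) :
    (Mfun (2 ^ k * u) : ℤ) =
      3 ^ k * Mfun u - ∑ l ∈ Finset.range k, 3 ^ l * psi ((2 : ℤ) ^ (k - l - 1) * u - 1) := by
  exact Mfun_pow_mul_aux u k
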